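/- Let λ > 0, f continuous on [0,L], and let u be a C^3 solution on [0,L] of λu + D^3u = f with u(0) = u(L) = Du(L) = 0. Then ∫_0^L u(x)^2 dx ≤ (1/λ^2) ∫_0^L f(x)^2 dx. -/

import Mathlib

open Set intervalIntegral MeasureTheory

noncomputable def D (L : ℝ) (u : ℝ → ℝ) (i : ℕ) (x : ℝ) : ℝ :=
  iteratedDerivWithin i u (Set.Icc 0 L) x

theorem stmt_10 (L : ℝ) (hL : 0 < L) (lam : ℝ) (hlam : 0 < lam)
    (u f : ℝ → ℝ) (hu : ContDiffOn ℝ 3 u (Set.Icc 0 L))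
    (hf : ContinuousOn f (Set.Icc 0 L))
    (heq : ∀ x ∈ Set.Ioo (0:ℝ) L, lam * u x + D L u 3 x = f x)
    (h0 : u 0 = 0) (hLv : u L = 0) (h1L : D L u 1 L = 0) :
    ∫ x in (0:ℝ)..L, (u x) ^ 2 ≤ (1 / lam ^ 2) * ∫ x in (0:ℝ)..L, (f x) ^ 2 := by
  have hle : (0:ℝ) ≤ L := hL.le
  set s := Set.Icc (0:ℝ) L with hs
  have husdo : UniqueDiffOn ℝ s := uniqueDiffOn_Icc hL
  set g1 := derivWithin u s with hg1
  set g2 := derivWithin g1 s with hg2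
  set g3 := derivWithin g2 s with hg3
  have hu1 : ContDiffOn ℝ 2 g1 s := hu.derivWithin husdo (by norm_num)
  have hu2 : ContDiffOn ℝ 1 g2 s := hu1.derivWithin husdo (by norm_num)
  have hu3 : ContDiffOn ℝ 0 g3 s := hu2.derivWithin husdo (by norm_num)
  have hcu : ContinuousOn u s := hu.continuousOn
  have hc1 : ContinuousOn g1 s := hu1.continuousOn
  have hc2 : ContinuousOn g2 s := hu2.continuousOn
  have hc3 : ContinuousOn g3 s := hu3.continuousOn
  have huIcc : Set.uIcc (0:ℝ) L = s := uIcc_of_le hle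
  -- identify iterated derivatives
  have hD1 : ∀ x ∈ s, D L u 1 x = g1 x := by
    intro x hx
    rw [D, iteratedDerivWithin_one]
  have hD3 : ∀ x ∈ s, D L u 3 x = g3 x := by
    intro x hx
    have e2 : EqOn (iteratedDerivWithin 2 u s) g2 s := by
      intro y hy
      rw [show (2:ℕ) = 1 + 1 from rfl, iteratedDerivWithin_succ]
      exact derivWithin_congr (fun z hz => congrFun iteratedDerivWithin_one z)
        (congrFun iteratedDerivWithin_one y)
    rw [D, show (3:ℕ) = 2 + 1 from rfl, iteratedDerivWithin_succ]
    exact derivWithin_congr e2 (e2 hx)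
  have hg1L : g1 L = 0 := by rw [← hD1 L (Set.right_mem_Icc.2 hle)]; exact h1L
  -- derivatives at interior points
  have key : ∀ x ∈ Set.Ioo (0:ℝ) L,
      HasDerivAt u (g1 x) x ∧ HasDerivAt g1 (g2 x) x ∧ HasDerivAt g2 (g3 x) x := by
    intro x hx
    have hxs : x ∈ s := Set.Ioo_subset_Icc_self hx
    have hmem : s ∈ nhds x := Icc_mem_nhds hx.1 hx.2
    refine ⟨?_, ?_, ?_⟩
    · exact (((hu.differentiableOn (by norm_num)) x hxs).hasDerivWithinAt).hasDerivAt hmem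
    · exact (((hu1.differentiableOn (by norm_num)) x hxs).hasDerivWithinAt).hasDerivAt hmem
    · exact (((hu2.differentiableOn (by norm_num)) x hxs).hasDerivWithinAt).hasDerivAt hmem
  -- integrability of the various continuous integrands
  have hint : ∀ g : ℝ → ℝ, ContinuousOn g s → IntervalIntegrable g volume 0 L := by
    intro g hg
    exact (huIcc ▸ hg).intervalIntegrable
  have hIu2 : IntervalIntegrable (fun x => u x ^ 2) volume 0 L := hint _ (hcu.pow 2)
  have hIf2 : IntervalIntegrable (fun x => f x ^ 2) volume 0 L := hint _ (hf.pow 2)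
  have hIuf : IntervalIntegrable (fun x => u x * f x) volume 0 L := hint _ (hcu.mul hf)
  have hIug3 : IntervalIntegrable (fun x => u x * g3 x) volume 0 L := hint _ (hcu.mul hc3)
  have hIg12 : IntervalIntegrable (fun x => g1 x * g2 x) volume 0 L := hint _ (hc1.mul hc2)
  -- Step A : ∫ (g1 g2 + u g3) = 0
  have stepA : (∫ x in (0:ℝ)..L, (g1 x * g2 x + u x * g3 x)) = 0 := by
    have := integral_eq_sub_of_hasDeriv_right_of_le hle
      (f := fun x => u x * g2 x) (f' := fun x => g1 x * g2 x + u x * g3 x)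
      (hcu.mul hc2)
      (fun x hx => (((key x hx).1.mul (key x hx).2.2)).hasDerivWithinAt)
      (hIg12.add hIug3)
    rw [this]
    show u L * g2 L - u 0 * g2 0 = 0
    rw [hLv, h0]; ring
  -- Step B : ∫ g1 g2 = - g1 0 ^2 / 2
  have stepB : (∫ x in (0:ℝ)..L, g1 x * g2 x) = - g1 0 ^ 2 / 2 := by
    have := integral_eq_sub_of_hasDeriv_right_of_le hle
      (f := fun x => g1 x ^ 2 / 2) (f' := fun x => g1 x * g2 x)
      ((hc1.pow 2).div_const 2)
      (fun x hx => by
        have h := (((key x hx).2.1).pow 2).div_const 2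
        have h2 : HasDerivAt (fun x => g1 x ^ 2 / 2) (g1 x * g2 x) x := by
          simp only [Pi.pow_apply] at h
          refine h.congr_deriv ?_
          push_cast
          ring
        exact h2.hasDerivWithinAt)
      hIg12
    rw [this]
    show g1 L ^ 2 / 2 - g1 0 ^ 2 / 2 = _
    rw [hg1L]; ring
  have stepAB : (∫ x in (0:ℝ)..L, u x * g3 x) = g1 0 ^ 2 / 2 := by
    have := intervalIntegral.integral_add hIg12 hIug3
    rw [stepA, stepB] at this
    linarith
  -- Step C : ∫ u f = lam ∫ u² + ∫ u g3
  have hne : ∀ᵐ x : ℝ ∂volume, x ≠ L := by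
    have h0 : volume ({L} : Set ℝ) = 0 := Real.volume_singleton
    rw [Filter.eventually_iff, mem_ae_iff]
    convert h0 using 2
    ext x; simp
  have stepC : (∫ x in (0:ℝ)..L, u x * f x)
      = (∫ x in (0:ℝ)..L, (lam * u x ^ 2 + u x * g3 x)) := by
    apply intervalIntegral.integral_congr_ae
    filter_upwards [hne] with x hxne hxI
    rw [Set.uIoc_of_le hle] at hxI
    have hxIoo : x ∈ Set.Ioo (0:ℝ) L := ⟨hxI.1, lt_of_le_of_ne hxI.2 hxne⟩
    have h1 := heq x hxIoo
    rw [hD3 x (Set.Ioo_subset_Icc_self hxIoo)] at h1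
    rw [← h1]; ring
  have stepC' : (∫ x in (0:ℝ)..L, u x * f x)
      = lam * (∫ x in (0:ℝ)..L, u x ^ 2) + g1 0 ^ 2 / 2 := by
    rw [stepC, intervalIntegral.integral_add (hIu2.const_mul lam) hIug3,
      intervalIntegral.integral_const_mul, stepAB]
  -- Step D : pointwise Young inequality and conclusion
  have stepD : (∫ x in (0:ℝ)..L, u x * f x)
      ≤ (∫ x in (0:ℝ)..L, (lam / 2 * u x ^ 2 + 1 / (2 * lam) * f x ^ 2)) := by
    apply intervalIntegral.integral_mono_on hle hIuf
      ((hIu2.const_mul _).add (hIf2.const_mul _))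
    intro x _
    rw [← sub_nonneg]
    have h2 : lam / 2 * u x ^ 2 + 1 / (2 * lam) * f x ^ 2 - u x * f x
        = (lam * u x - f x) ^ 2 / (2 * lam) := by
      field_simp
      ring
    rw [h2]
    positivity
  -- conclusion
  have hfinal : lam * (∫ x in (0:ℝ)..L, u x ^ 2)
      ≤ lam / 2 * (∫ x in (0:ℝ)..L, u x ^ 2)
        + 1 / (2 * lam) * (∫ x in (0:ℝ)..L, f x ^ 2) := by
    have h1 : lam * (∫ x in (0:ℝ)..L, u x ^ 2) ≤ ∫ x in (0:ℝ)..L, u x * f x := by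
      rw [stepC']
      nlinarith [sq_nonneg (g1 0)]
    calc lam * (∫ x in (0:ℝ)..L, u x ^ 2) ≤ ∫ x in (0:ℝ)..L, u x * f x := h1
      _ ≤ ∫ x in (0:ℝ)..L, (lam / 2 * u x ^ 2 + 1 / (2 * lam) * f x ^ 2) := stepD
      _ = lam / 2 * (∫ x in (0:ℝ)..L, u x ^ 2)
          + 1 / (2 * lam) * (∫ x in (0:ℝ)..L, f x ^ 2) := by
        rw [intervalIntegral.integral_add (hIu2.const_mul _) (hIf2.const_mul _),
          intervalIntegral.integral_const_mul, intervalIntegral.integral_const_mul]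
  have hlam2 : (0:ℝ) < lam ^ 2 := by positivity
  set A := ∫ x in (0:ℝ)..L, u x ^ 2 with hA
  set B := ∫ x in (0:ℝ)..L, f x ^ 2 with hB
  have h4 : lam / 2 * A ≤ 1 / (2 * lam) * B := by linarith
  have h5 := mul_le_mul_of_nonneg_left h4 (by positivity : (0:ℝ) ≤ 2 * lam)
  have h6 : 2 * lam * (lam / 2 * A) = lam ^ 2 * A := by ring
  have h7 : 2 * lam * (1 / (2 * lam) * B) = B := by field_simp
  rw [h6, h7] at h5
  rw [div_mul_eq_mul_div, le_div_iff₀ hlam2]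
  linarith
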